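/- Let G be a group, σ, τ : G → G group endomorphisms, a ∈ G a (σ,τ)-central element, and φ : G → (ℂ, +) a nonzero group homomorphism. Then the (σ,τ)-central derivation D determined by D(g) = φ(g)·(σ(g)·a) is not quasi-inner: there exist g, h ∈ G with σ(g)⁻¹·h = h·τ(g)⁻¹ and D(g)(h) ≠ 0. -/

import Mathlib

/-- for a `(σ,τ)`-central element `a ∈ G` and a *nonzero* additive character
`φ : G → (ℂ,+)`, the `(σ,τ)`-central derivation `D` determined by `D(g) = φ(g)·(σ(g)·a)`
is not quasi-inner: there is a loop `(h,g)` (i.e. `σ(g)⁻¹·h = h·τ(g)⁻¹`) on which the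
coefficient `D(g)(h)` is nonzero. -/
theorem central_derivation_not_quasi_inner
    {G : Type*} [Group G] (σ τ : G →* G) (a : G)
    (ha : ∀ v : G, a * τ v = σ v * a)
    (φ : G → ℂ) (hφ : ∀ x y : G, φ (x * y) = φ x + φ y) (hφne : φ ≠ 0)
    (D : MonoidAlgebra ℂ G →ₗ[ℂ] MonoidAlgebra ℂ G)
    (hDbasis : ∀ g : G, D (MonoidAlgebra.of ℂ G g)
        = φ g • MonoidAlgebra.of ℂ G (σ g * a)) :
    ∃ g h : G, (σ g)⁻¹ * h = h * (τ g)⁻¹ ∧ (D (MonoidAlgebra.of ℂ G g)).coeff h ≠ 0 := by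
  obtain ⟨g, hg⟩ : ∃ g : G, φ g ≠ 0 := by
    by_contra h
    push_neg at h
    exact hφne (funext h)
  refine ⟨g, σ g * a, ?_, ?_⟩
  · rw [inv_mul_cancel_left, mul_assoc, ← mul_assoc, ← ha, mul_inv_cancel_right]
  · rw [hDbasis]
    simpa [MonoidAlgebra.of_apply, MonoidAlgebra.single_apply] using hg
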